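/- Let q ∈ ℂ with q ≠ 0, and suppose α, β, z are elements of a unital *-algebra A over ℂ satisfying the relations (s4rel) with parameter q. Then the elements α' = α*, β' = −q·β, z' = z satisfy the relations (s4rel) with parameter 1/q. Consequently, there is a unital *-algebra isomorphism Φ: A_{1/q} → A_q determined on generators by Φ(α) = α*, Φ(β) = −q·β, Φ(z) = z. -/

import Mathlib

/-- The relations (s4rel) defining the quantum 4-sphere `S⁴_q`:
`z* = z`, `zα = αz`, `zβ = βz`, `βα = conj(q)·αβ`, `β*α = q·αβ*`, `ββ* = β*β`,
`α*α + |q|²·β*β + z² = 1`, `αα* + ββ* + z² = 1`, where `|q|² = q·conj q`. -/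
def S4Rel {A : Type*} [Ring A] [Algebra ℂ A] [StarRing A] [StarModule ℂ A]
    (q : ℂ) (α β z : A) : Prop :=
  star z = z ∧ z * α = α * z ∧ z * β = β * z ∧
    β * α = (starRingEnd ℂ) q • (α * β) ∧
    star β * α = q • (α * star β) ∧
    β * star β = star β * β ∧
    star α * α + (q * (starRingEnd ℂ) q) • (star β * β) + z ^ 2 = 1 ∧
    α * star α + β * star β + z ^ 2 = 1

/-- `A` (with marked elements `α, β, z`) is *the* universal unital complex *-algebra on
generators `α, β, z` subject to the relations (s4rel) with parameter `q`, i.e. the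
algebra `A_q` of the quantum 4-sphere `S⁴_q`: the generators satisfy the relations, and
for any unital complex *-algebra with elements satisfying the relations there is a unique
unital *-algebra homomorphism sending generators to those elements. -/
def IsUniversalS4 (q : ℂ) (A : Type) [Ring A] [Algebra ℂ A] [StarRing A]
    [StarModule ℂ A] (α β z : A) : Prop :=
  S4Rel q α β z ∧
    ∀ (B : Type) [Ring B] [Algebra ℂ B] [StarRing B] [StarModule ℂ B],
      ∀ a b c : B, S4Rel q a b c →
        ∃! φ : A →⋆ₐ[ℂ] B, φ α = a ∧ φ β = b ∧ φ z = c

private lemma s4rel_inv {A : Type*} [Ring A] [Algebra ℂ A] [StarRing A] [StarModule ℂ A]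
    (q : ℂ) (hq : q ≠ 0) (α β z : A) (h : S4Rel q α β z) :
    S4Rel (1 / q) (star α) (-(q • β)) z := by
  obtain ⟨h1, h2, h3, h4, h5, h6, h7, h8⟩ := h
  have hqc : (starRingEnd ℂ) q ≠ 0 := by
    rw [starRingEnd_apply]; exact star_ne_zero.mpr hq
  -- star of h2 : star α * z = z * star α
  have h2' : z * star α = star α * z := by
    have := congrArg star h2
    simpa [star_mul, h1] using this.symm
  -- star of h5 : star α * β = conj q • (β * star α)
  have h5' : star α * β = (starRingEnd ℂ) q • (β * star α) := by
    have := congrArg star h5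
    simpa [star_mul, star_smul, star_star] using this
  have h5'' : β * star α = ((starRingEnd ℂ) q)⁻¹ • (star α * β) := by
    rw [h5', smul_smul, inv_mul_cancel₀ hqc, one_smul]
  -- star of h4 : star α * star β = q • (star β * star α)
  have h4' : star α * star β = q • (star β * star α) := by
    have := congrArg star h4
    simpa [star_mul, star_smul, star_star] using this
  have h4'' : star β * star α = q⁻¹ • (star α * star β) := by
    rw [h4', smul_smul, inv_mul_cancel₀ hq, one_smul]
  refine ⟨h1, h2', ?_, ?_, ?_, ?_, ?_, ?_⟩
  · simp only [mul_neg, neg_mul, mul_smul_comm, smul_mul_assoc, h3]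
  · -- (-(q•β)) * star α = conj(1/q) • (star α * -(q•β))
    simp only [neg_mul, mul_neg, smul_neg, smul_mul_assoc, mul_smul_comm, smul_smul, neg_inj]
    rw [h5'', smul_smul]
    congr 1
    rw [map_div₀, map_one]
    field_simp
  · -- star(-(q•β)) * star α = (1/q) • (star α * -(q•β))... careful: star β̃
    simp only [star_neg, star_smul, neg_mul, mul_neg, smul_neg, smul_mul_assoc,
      mul_smul_comm, smul_smul, neg_inj]
    rw [h4'', smul_smul]
    congr 1
    field_simp
  · simp only [star_neg, star_smul, neg_mul, mul_neg, neg_neg, smul_neg, smul_mul_assoc,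
      mul_smul_comm, smul_smul, ← starRingEnd_apply]
    rw [h6, mul_comm q]
  · -- relation 7 for new triple
    simp only [star_neg, star_smul, star_star, neg_mul, mul_neg, neg_neg, smul_neg,
      smul_mul_assoc, mul_smul_comm, smul_smul, ← starRingEnd_apply]
    have hscal : 1 / q * (starRingEnd ℂ) (1 / q) * (q * (starRingEnd ℂ) q) = 1 := by
      rw [map_div₀, map_one]
      field_simp
    rw [hscal, one_smul, ← h6]
    exact h8
  · simp only [star_star, star_neg, star_smul, neg_mul, mul_neg, neg_neg, smul_neg,
      smul_mul_assoc, mul_smul_comm, smul_smul, ← starRingEnd_apply]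
    rw [h6, mul_comm ((starRingEnd ℂ) q)]
    exact h7

/-- If `(α, β, z)` satisfy (s4rel) with parameter `q ≠ 0`, then
`(α*, -q·β, z)` satisfy (s4rel) with parameter `1/q`.  Consequently there is a unital
*-algebra isomorphism `Φ : A_{1/q} → A_q` determined on generators by `Φ(α) = α*`,
`Φ(β) = -q·β`, `Φ(z) = z`. -/
theorem s4_q_inverse_isomorphism (q : ℂ) (hq : q ≠ 0) :
    (∀ (A : Type) [Ring A] [Algebra ℂ A] [StarRing A] [StarModule ℂ A],
      ∀ α β z : A, S4Rel q α β z → S4Rel (1 / q) (star α) (-(q • β)) z) ∧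
    (∀ (B : Type) [Ring B] [Algebra ℂ B] [StarRing B] [StarModule ℂ B],
      ∀ α β z : B, IsUniversalS4 (1 / q) B α β z →
        ∀ (C : Type) [Ring C] [Algebra ℂ C] [StarRing C] [StarModule ℂ C],
          ∀ α' β' z' : C, IsUniversalS4 q C α' β' z' →
            ∃ Φ : B ≃⋆ₐ[ℂ] C, Φ α = star α' ∧ Φ β = -(q • β') ∧ Φ z = z') := by
  constructor
  · intro A _ _ _ _ α β z h
    exact s4rel_inv q hq α β z h
  · intro B _ _ _ _ α β z hB C _ _ _ _ α' β' z' hC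
    obtain ⟨hBrel, hBuniv⟩ := hB
    obtain ⟨hCrel, hCuniv⟩ := hC
    -- the target triple in C satisfies the (1/q)-relations
    have hC' : S4Rel (1 / q) (star α') (-(q • β')) z' :=
      s4rel_inv q hq α' β' z' hCrel
    -- the target triple in B satisfies the q-relations
    have hB' : S4Rel q (star α) (-((1 / q) • β)) z := by
      have := s4rel_inv (1 / q) (one_div_ne_zero hq) α β z hBrel
      rwa [one_div_one_div] at this
    obtain ⟨φ, hφ, -⟩ := hBuniv C (star α') (-(q • β')) z' hC'
    obtain ⟨ψ, hψ, -⟩ := hCuniv B (star α) (-((1 / q) • β)) z hB'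
    obtain ⟨ρB, -, huB⟩ := hBuniv B α β z hBrel
    obtain ⟨ρC, -, huC⟩ := hCuniv C α' β' z' hCrel
    have hψφ : ∀ x, ψ (φ x) = x := by
      have e1 : ψ.comp φ = ρB := by
        apply huB
        refine ⟨?_, ?_, ?_⟩ <;>
          simp [StarAlgHom.comp_apply, hφ.1, hφ.2.1, hφ.2.2, hψ.1, hψ.2.1, hψ.2.2,
            map_star, map_smul, smul_smul, smul_neg, neg_neg, one_div, mul_inv_cancel₀ hq, inv_mul_cancel₀ hq, one_smul]
      have e2 : (StarAlgHom.id ℂ B) = ρB := huB _ ⟨rfl, rfl, rfl⟩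
      intro x
      have := DFunLike.congr_fun (e1.trans e2.symm) x
      simpa using this
    have hφψ : ∀ x, φ (ψ x) = x := by
      have e1 : φ.comp ψ = ρC := by
        apply huC
        refine ⟨?_, ?_, ?_⟩ <;>
          simp [StarAlgHom.comp_apply, hφ.1, hφ.2.1, hφ.2.2, hψ.1, hψ.2.1, hψ.2.2,
            map_star, map_smul, smul_smul, smul_neg, neg_neg, one_div, mul_inv_cancel₀ hq, inv_mul_cancel₀ hq, one_smul]
      have e2 : (StarAlgHom.id ℂ C) = ρC := huC _ ⟨rfl, rfl, rfl⟩
      intro x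
      have := DFunLike.congr_fun (e1.trans e2.symm) x
      simpa using this
    refine ⟨StarAlgEquiv.ofStarAlgHom φ ψ (StarAlgHom.ext hψφ) (StarAlgHom.ext hφψ), hφ.1, hφ.2.1, hφ.2.2⟩
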